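/- Let X be a topological space, let k be a natural number, and for each j = 1, …, k let f_j = g_j − g'_j where g_j, g'_j : X → ℝ are bounded lower semicontinuous functions. Let U ⊆ X be a nonempty open set and η > 0. Then there is a nonempty open set V ⊆ U such that for every j = 1, …, k the oscillation of f_j on V is at most η, i.e., |f_j(x') − f_j(x'')| ≤ η for all x', x'' ∈ V. -/

import Mathlib

/-- One-step lemma: a bounded lsc function has small oscillation on some nonempty open
subset of any nonempty open set. -/
lemma stmt9_one {X : Type*} [TopologicalSpace X] (g : X → ℝ)
    (hlsc : ∀ r : ℝ, IsOpen {x : X | r < g x})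
    (hbdd : Bornology.IsBounded (Set.range g))
    (U : Set X) (hUopen : IsOpen U) (hUne : U.Nonempty) (ε : ℝ) (hε : 0 < ε) :
    ∃ V : Set X, IsOpen V ∧ V.Nonempty ∧ V ⊆ U ∧
      ∀ x ∈ V, ∀ x' ∈ V, |g x - g x'| ≤ ε := by
  have hne : (g '' U).Nonempty := hUne.image g
  have hbdda : BddAbove (g '' U) :=
    (hbdd.bddAbove).mono (Set.image_subset_range _ _)
  set s := sSup (g '' U) with hs
  obtain ⟨y, hy, hys⟩ := exists_lt_of_lt_csSup hne (show s - ε < s by linarith)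
  obtain ⟨x₀, hx₀U, rfl⟩ := hy
  refine ⟨U ∩ {x | s - ε < g x}, hUopen.inter (hlsc _), ⟨x₀, hx₀U, hys⟩,
    Set.inter_subset_left, ?_⟩
  rintro x ⟨hxU, hx⟩ x' ⟨hx'U, hx'⟩
  have h1 : g x ≤ s := le_csSup hbdda ⟨x, hxU, rfl⟩
  have h2 : g x' ≤ s := le_csSup hbdda ⟨x', hx'U, rfl⟩
  rw [abs_sub_le_iff]
  constructor <;> [skip; skip] <;> simp only [Set.mem_setOf_eq] at hx hx' <;> linarith

/-- List version. -/
lemma stmt9_list {X : Type*} [TopologicalSpace X] (L : List (X → ℝ))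
    (hL : ∀ g ∈ L, (∀ r : ℝ, IsOpen {x : X | r < g x}) ∧
      Bornology.IsBounded (Set.range g)) :
    ∀ (U : Set X), IsOpen U → U.Nonempty → ∀ ε : ℝ, 0 < ε →
    ∃ V : Set X, IsOpen V ∧ V.Nonempty ∧ V ⊆ U ∧
      ∀ g ∈ L, ∀ x ∈ V, ∀ x' ∈ V, |g x - g x'| ≤ ε := by
  induction L with
  | nil => intro U hUo hUne ε hε; exact ⟨U, hUo, hUne, le_refl _, by simp⟩
  | cons h t ih =>
    intro U hUo hUne ε hε
    obtain ⟨W, hWo, hWne, hWU, hWosc⟩ :=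
      ih (fun g hg => hL g (List.mem_cons_of_mem _ hg)) U hUo hUne ε hε
    obtain ⟨hlsc, hbdd⟩ := hL h (List.mem_cons_self)
    obtain ⟨V, hVo, hVne, hVW, hVosc⟩ := stmt9_one h hlsc hbdd W hWo hWne ε hε
    refine ⟨V, hVo, hVne, hVW.trans hWU, ?_⟩
    intro g hg x hx x' hx'
    rcases List.mem_cons.mp hg with rfl | hg
    · exact hVosc x hx x' hx'
    · exact hWosc g hg x (hVW hx) x' (hVW hx')

/-- If `f j = g j - g' j` for bounded lower semicontinuous functions `g j, g' j`, `j = 1,…,k`,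
and `U` is nonempty open, then for any `η > 0` there is a nonempty open `V ⊆ U` on which the
oscillation of every `f j` is at most `η`. -/
theorem stmt9 {X : Type*} [TopologicalSpace X] (k : ℕ) (g g' : Fin k → X → ℝ)
    (hlsc : ∀ j, ∀ r : ℝ, IsOpen {x : X | r < g j x})
    (hlsc' : ∀ j, ∀ r : ℝ, IsOpen {x : X | r < g' j x})
    (hbdd : ∀ j, Bornology.IsBounded (Set.range (g j)))
    (hbdd' : ∀ j, Bornology.IsBounded (Set.range (g' j)))
    (f : Fin k → X → ℝ) (hf : ∀ j x, f j x = g j x - g' j x)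
    (U : Set X) (hUopen : IsOpen U) (hUne : U.Nonempty)
    (η : ℝ) (hη : 0 < η) :
    ∃ V : Set X, IsOpen V ∧ V.Nonempty ∧ V ⊆ U ∧
      ∀ j, ∀ x ∈ V, ∀ x' ∈ V, |f j x - f j x'| ≤ η := by
  set L : List (X → ℝ) :=
    (List.finRange k).flatMap (fun j => [g j, g' j]) with hLdef
  have hL : ∀ h ∈ L, (∀ r : ℝ, IsOpen {x : X | r < h x}) ∧
      Bornology.IsBounded (Set.range h) := by
    intro h hh
    rw [hLdef, List.mem_flatMap] at hh
    obtain ⟨j, -, hj⟩ := hh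
    simp only [List.mem_cons, List.mem_singleton, List.not_mem_nil, or_false] at hj
    rcases hj with rfl | rfl
    · exact ⟨hlsc j, hbdd j⟩
    · exact ⟨hlsc' j, hbdd' j⟩
  obtain ⟨V, hVo, hVne, hVU, hVosc⟩ :=
    stmt9_list L hL U hUopen hUne (η / 2) (by linarith)
  refine ⟨V, hVo, hVne, hVU, ?_⟩
  intro j x hx x' hx'
  have hmemg : g j ∈ L := by
    rw [hLdef, List.mem_flatMap]; exact ⟨j, List.mem_finRange j, by simp⟩
  have hmemg' : g' j ∈ L := by
    rw [hLdef, List.mem_flatMap]; exact ⟨j, List.mem_finRange j, by simp⟩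
  have h1 := hVosc (g j) hmemg x hx x' hx'
  have h2 := hVosc (g' j) hmemg' x hx x' hx'
  rw [hf j x, hf j x']
  calc |g j x - g' j x - (g j x' - g' j x')|
      = |(g j x - g j x') - (g' j x - g' j x')| := by ring_nf
    _ ≤ |g j x - g j x'| + |g' j x - g' j x'| := abs_sub _ _
    _ ≤ η / 2 + η / 2 := add_le_add h1 h2
    _ = η := by ring
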